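/- Let ‖·‖ be a monotone norm on ℝⁿ (|u| ≤ |v| entrywise implies ‖u‖ ≤ ‖v‖). For nonnegative vectors x₁, …, xₘ in ℝⁿ and αₖ > 0 with Σ αₖ = 1, one has ‖x₁^(α₁) ∘ ⋯ ∘ xₘ^(αₘ)‖ ≤ ‖x₁‖^(α₁) ⋯ ‖xₘ‖^(αₘ), where powers and ∘ are entrywise. -/

import Mathlib

section aux

variable {n : ℕ} (N : (Fin n → ℝ) → ℝ)
  (hN_add : ∀ u v, N (u + v) ≤ N u + N v)
  (hN_smul : ∀ (c : ℝ) u, N (c • u) = |c| * N u)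

include hN_smul in
lemma aux_N_zero : N 0 = 0 := by
  have := hN_smul 0 0
  simpa using this

include hN_add hN_smul in
lemma aux_N_nonneg (u : Fin n → ℝ) : 0 ≤ N u := by
  have h1 := hN_add u ((-1 : ℝ) • u)
  have h2 := hN_smul (-1) u
  have h3 : u + (-1 : ℝ) • u = 0 := by ext i; simp
  rw [h3, aux_N_zero N hN_smul, h2] at h1
  simp at h1
  linarith

include hN_add hN_smul in
lemma aux_N_sum {m : ℕ} (u : Fin m → Fin n → ℝ) :
    N (∑ k, u k) ≤ ∑ k, N (u k) := by
  classical
  have : ∀ s : Finset (Fin m), N (∑ k ∈ s, u k) ≤ ∑ k ∈ s, N (u k) := by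
    intro s
    induction s using Finset.induction with
    | empty => simp [aux_N_zero N hN_smul]
    | insert _ _ hk ih =>
      rw [Finset.sum_insert hk, Finset.sum_insert hk]
      exact le_trans (hN_add _ _) (by linarith)
  exact this Finset.univ

/-- Core: geometric mean is bounded by the arithmetic mean in `N`. -/
lemma aux_core {n m : ℕ} (N : (Fin n → ℝ) → ℝ)
    (hN_add : ∀ u v, N (u + v) ≤ N u + N v)
    (hN_smul : ∀ (c : ℝ) u, N (c • u) = |c| * N u)
    (hN_mono : ∀ u v, (∀ i, |u i| ≤ |v i|) → N u ≤ N v)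
    (α : Fin m → ℝ) (hα : ∀ k, 0 < α k) (hsum : ∑ k, α k = 1)
    (x : Fin m → Fin n → ℝ) (hx : ∀ k i, 0 ≤ x k i) :
    N (fun i => ∏ k, (x k i) ^ (α k)) ≤ ∑ k, α k * N (x k) := by
  have step1 : N (fun i => ∏ k, (x k i) ^ (α k)) ≤ N (∑ k, α k • x k) := by
    apply hN_mono
    intro i
    have hg : 0 ≤ ∏ k, (x k i) ^ (α k) :=
      Finset.prod_nonneg fun k _ => Real.rpow_nonneg (hx k i) _
    have ha : 0 ≤ ∑ k, α k * x k i :=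
      Finset.sum_nonneg fun k _ => mul_nonneg (hα k).le (hx k i)
    have hAM := Real.geom_mean_le_arith_mean_weighted Finset.univ α (fun k => x k i)
      (fun k _ => (hα k).le) hsum (fun k _ => hx k i)
    have : (∑ k, α k • x k) i = ∑ k, α k * x k i := by simp
    rw [abs_of_nonneg hg, this, abs_of_nonneg ha]
    exact hAM
  refine step1.trans ?_
  refine (aux_N_sum N hN_add hN_smul _).trans ?_
  apply Finset.sum_le_sum
  intro k _
  rw [hN_smul, abs_of_nonneg (hα k).le]

end aux

theorem monotone_norm_geom_mean {n m : ℕ} (N : (Fin n → ℝ) → ℝ)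
    (hN_add : ∀ u v, N (u + v) ≤ N u + N v)
    (hN_smul : ∀ (c : ℝ) u, N (c • u) = |c| * N u)
    (hN_mono : ∀ u v, (∀ i, |u i| ≤ |v i|) → N u ≤ N v)
    (α : Fin m → ℝ) (hα : ∀ k, 0 < α k) (hsum : ∑ k, α k = 1)
    (x : Fin m → Fin n → ℝ) (hx : ∀ k i, 0 ≤ x k i) :
    N (fun i => ∏ k, (x k i) ^ (α k)) ≤ ∏ k, (N (x k)) ^ (α k) := by
  classical
  have hNnn : ∀ u, 0 ≤ N u := aux_N_nonneg N hN_add hN_smul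
  by_cases hpos : ∀ k, 0 < N (x k)
  · -- all norms positive: normalize
    set G : ℝ := ∏ k, (N (x k)) ^ (α k) with hG
    have hGpos : 0 < G := Finset.prod_pos fun k _ => Real.rpow_pos_of_pos (hpos k) _
    set c : Fin m → ℝ := fun k => G / N (x k) with hc
    have hcpos : ∀ k, 0 < c k := fun k => div_pos hGpos (hpos k)
    set y : Fin m → Fin n → ℝ := fun k => c k • x k with hy
    have hyx : ∀ k i, 0 ≤ y k i := fun k i => mul_nonneg (hcpos k).le (hx k i)
    have hcore := aux_core N hN_add hN_smul hN_mono α hα hsum y hyx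
    have hprodc : ∏ k, (c k) ^ (α k) = 1 := by
      have : ∀ k, (c k) ^ (α k) = G ^ (α k) / (N (x k)) ^ (α k) := fun k =>
        Real.div_rpow hGpos.le (hpos k).le (α k)
      simp_rw [this]
      rw [Finset.prod_div_distrib, ← Real.rpow_sum_of_pos hGpos, hsum, Real.rpow_one]
      field_simp
      rw [← hG, div_self hGpos.ne']
    have hgeom : (fun i => ∏ k, (y k i) ^ (α k)) = (fun i => ∏ k, (x k i) ^ (α k)) := by
      funext i
      have : ∀ k, (y k i) ^ (α k) = (c k) ^ (α k) * (x k i) ^ (α k) := fun k => by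
        simp only [hy, Pi.smul_apply, smul_eq_mul]
        exact Real.mul_rpow (hcpos k).le (hx k i)
      simp_rw [this, Finset.prod_mul_distrib, hprodc, one_mul]
    rw [hgeom] at hcore
    have hsumy : ∑ k, α k * N (y k) = G := by
      have : ∀ k, α k * N (y k) = α k * G := by
        intro k
        rw [hy]
        simp only
        rw [hN_smul, abs_of_nonneg (hcpos k).le, hc]
        simp only
        rw [div_mul_cancel₀ _ (hpos k).ne']
      simp_rw [this, ← Finset.sum_mul, hsum, one_mul]
    rw [hsumy] at hcore
    exact hcore
  · -- some norm is zero
    push_neg at hpos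
    obtain ⟨k₀, hk₀⟩ := hpos
    have hk₀' : N (x k₀) = 0 := le_antisymm hk₀ (hNnn _)
    have hRHS : ∏ k, (N (x k)) ^ (α k) = 0 := by
      apply Finset.prod_eq_zero (Finset.mem_univ k₀)
      rw [hk₀', Real.zero_rpow (hα k₀).ne']
    rw [hRHS]
    -- show N(geom) ≤ s^{α k₀} * C for all s > 0
    set C : ℝ := ∑ k ∈ Finset.univ.erase k₀, α k * N (x k) with hC
    have hCnn : 0 ≤ C := Finset.sum_nonneg fun k _ =>
      mul_nonneg (hα k).le (hNnn _)
    have key : ∀ s : ℝ, 0 < s →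
        N (fun i => ∏ k, (x k i) ^ (α k)) ≤ s ^ (α k₀) * C := by
      intro s hs
      set y : Fin m → Fin n → ℝ := fun k => if k = k₀ then x k else s • x k with hy
      have hyx : ∀ k i, 0 ≤ y k i := by
        intro k i
        by_cases h : k = k₀
        · subst h; simpa [hy] using hx k i
        · simp only [hy, h, if_false, Pi.smul_apply, smul_eq_mul]
          exact mul_nonneg hs.le (hx k i)
      have hcore := aux_core N hN_add hN_smul hN_mono α hα hsum y hyx
      -- geom y = s^{1 - α k₀} • geom x
      have hsum' : ∑ k ∈ Finset.univ.erase k₀, α k = 1 - α k₀ := by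
        have := Finset.add_sum_erase Finset.univ α (Finset.mem_univ k₀)
        rw [hsum] at this
        linarith
      have hgeom : ∀ i, ∏ k, (y k i) ^ (α k)
          = s ^ (1 - α k₀) * ∏ k, (x k i) ^ (α k) := by
        intro i
        have hterm : ∀ k, (y k i) ^ (α k) =
            (if k = k₀ then 1 else s ^ (α k)) * (x k i) ^ (α k) := by
          intro k
          by_cases h : k = k₀
          · simp [hy, h]
          · simp only [hy, h, if_false, Pi.smul_apply, smul_eq_mul]
            exact Real.mul_rpow hs.le (hx k i)
        simp_rw [hterm, Finset.prod_mul_distrib]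
        congr 1
        trans (∏ k ∈ Finset.univ.erase k₀, s ^ α k)
        · rw [← Finset.prod_erase_mul Finset.univ _ (Finset.mem_univ k₀)]
          rw [if_pos rfl, mul_one]
          exact Finset.prod_congr rfl fun k hk => if_neg (Finset.mem_erase.mp hk).1
        · rw [← Real.rpow_sum_of_pos hs, hsum']
      have hgeom' : (fun i => ∏ k, (y k i) ^ (α k))
          = (s ^ (1 - α k₀)) • (fun i => ∏ k, (x k i) ^ (α k)) := by
        funext i; simp [hgeom i]
      rw [hgeom', hN_smul, abs_of_nonneg (Real.rpow_nonneg hs.le _)] at hcore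
      have hsumy : ∑ k, α k * N (y k) = s * C := by
        rw [hC, Finset.mul_sum]
        rw [← Finset.add_sum_erase Finset.univ (fun k => α k * N (y k)) (Finset.mem_univ k₀)]
        have h1 : α k₀ * N (y k₀) = 0 := by simp [hy, hk₀']
        rw [h1, zero_add]
        apply Finset.sum_congr rfl
        intro k hk
        have hk' : k ≠ k₀ := (Finset.mem_erase.mp hk).1
        simp only [hy, hk', if_false]
        rw [hN_smul, abs_of_nonneg hs.le]
        ring
      rw [hsumy] at hcore
      -- hcore : s^(1-αk₀) * N(geom x) ≤ s * C
      have hmul : s ^ (α k₀ - 1) * (s ^ (1 - α k₀) * N (fun i => ∏ k, (x k i) ^ (α k)))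
          ≤ s ^ (α k₀ - 1) * (s * C) :=
        mul_le_mul_of_nonneg_left hcore (Real.rpow_nonneg hs.le _)
      calc N (fun i => ∏ k, (x k i) ^ (α k))
          = s ^ (α k₀ - 1) * (s ^ (1 - α k₀) * N (fun i => ∏ k, (x k i) ^ (α k))) := by
            rw [← mul_assoc, ← Real.rpow_add hs]
            simp
        _ ≤ s ^ (α k₀ - 1) * (s * C) := hmul
        _ = s ^ (α k₀) * C := by
            rw [← mul_assoc]
            congr 1
            rw [← Real.rpow_add_one hs.ne']
            norm_num
    -- take s → 0⁺
    have htend : Filter.Tendsto (fun s : ℝ => s ^ (α k₀) * C)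
        (nhdsWithin 0 (Set.Ioi 0)) (nhds 0) := by
      have h1 : Filter.Tendsto (fun s : ℝ => s ^ (α k₀))
          (nhdsWithin 0 (Set.Ioi 0)) (nhds 0) := by
        have := (Real.continuousAt_rpow_const 0 (α k₀) (Or.inr (hα k₀).le)).continuousWithinAt
          (s := Set.Ioi 0)
        simpa [Real.zero_rpow (hα k₀).ne', ContinuousWithinAt] using this
      simpa using h1.mul_const C
    refine ge_of_tendsto htend ?_
    filter_upwards [self_mem_nhdsWithin] with s hs
    exact key s hs
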